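/- Let k ≥ 1, n = 2^k, and c be an odd integer with α^n ≡ c (mod 2^{2k+1}) for some odd integer α. Then for β = α + 2^{2k+1} and f(x) = x^n − c, the 2-adic absolute value satisfies |f(β)|_2 < |f'(β)|_2^2, so Hensel's lemma applies to produce a root of f in ℚ_2. -/

import Mathlib

open Polynomial

private lemma norm_beta (k : ℕ) (α : ℤ) (hα : Odd α) :
    ‖((α + 2 ^ (2 * k + 1) : ℤ) : ℚ_[2])‖ = 1 := by
  have hodd : ¬ (2 : ℤ) ∣ (α + 2 ^ (2 * k + 1)) := by
    intro hdvd
    have : (2:ℤ) ∣ α := (dvd_add_right (dvd_pow_self 2 (Nat.succ_ne_zero _))).mp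
      (by rwa [add_comm] at hdvd)
    exact (Int.not_even_iff_odd.mpr hα) (even_iff_two_dvd.mpr this)
  have h1 := Padic.norm_int_le_one (p := 2) (α + 2 ^ (2 * k + 1))
  have h2 := (Padic.norm_intCast_lt_one_iff (p := 2) (k := α + 2 ^ (2 * k + 1))).not
  rcases lt_or_eq_of_le h1 with h | h
  · exact absurd (Padic.norm_intCast_lt_one_iff.mp (by exact_mod_cast h)) hodd
  · exact h

theorem stmt_2 (k : ℕ) (hk : 1 ≤ k) (c α : ℤ) (hc : Odd c) (hα : Odd α)
    (h : α ^ (2 ^ k) ≡ c [ZMOD (2 ^ (2 * k + 1) : ℤ)]) :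
    (‖((α + 2 ^ (2 * k + 1) : ℤ) : ℚ_[2]) ^ (2 ^ k) - (c : ℚ_[2])‖ <
      ‖((2 ^ k : ℕ) : ℚ_[2]) * ((α + 2 ^ (2 * k + 1) : ℤ) : ℚ_[2]) ^ (2 ^ k - 1)‖ ^ 2) ∧
    ∃ x : ℚ_[2], x ^ (2 ^ k) = (c : ℚ_[2]) := by
  set β : ℤ := α + 2 ^ (2 * k + 1) with hβdef
  -- divisibility
  have hmod : β ^ (2 ^ k) ≡ c [ZMOD (2 ^ (2 * k + 1) : ℤ)] := by
    have hβα : β ≡ α [ZMOD (2 ^ (2 * k + 1) : ℤ)] :=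
      Int.ModEq.symm (Int.modEq_iff_dvd.mpr (by simp [hβdef]))
    exact (hβα.pow _).trans h
  have hdvd : (2 : ℤ) ^ (2 * k + 1) ∣ β ^ (2 ^ k) - c := Int.ModEq.dvd hmod.symm
  -- norm bounds
  have hL : ‖((β ^ (2 ^ k) - c : ℤ) : ℚ_[2])‖ ≤ (2 : ℝ) ^ (-(2 * k + 1 : ℕ) : ℤ) := by
    have := (Padic.norm_int_le_pow_iff_dvd (p := 2) (β ^ (2 ^ k) - c) (2 * k + 1)).mpr
      (by exact_mod_cast hdvd)
    exact_mod_cast this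
  have hβ1 : ‖((β : ℤ) : ℚ_[2])‖ = 1 := norm_beta k α hα
  have hn : ‖((2 ^ k : ℕ) : ℚ_[2])‖ = (2 : ℝ) ^ (-(k : ℤ)) := by
    have : ((2 ^ k : ℕ) : ℚ_[2]) = ((2 : ℕ) : ℚ_[2]) ^ k := by push_cast; ring
    rw [this, norm_pow, Padic.norm_p]
    rw [zpow_neg, zpow_natCast, inv_pow]
    norm_num
  have hRHS : ‖((2 ^ k : ℕ) : ℚ_[2]) * ((β : ℤ) : ℚ_[2]) ^ (2 ^ k - 1)‖ ^ 2
      = (2 : ℝ) ^ (-(2 * k : ℕ) : ℤ) := by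
    rw [norm_mul, norm_pow, hβ1, hn]
    rw [one_pow, mul_one, ← zpow_natCast ((2:ℝ) ^ (-(k:ℤ))) 2, ← zpow_mul]
    congr 1
    push_cast
    ring
  have hmain : ‖((β : ℤ) : ℚ_[2]) ^ (2 ^ k) - (c : ℚ_[2])‖ <
      ‖((2 ^ k : ℕ) : ℚ_[2]) * ((β : ℤ) : ℚ_[2]) ^ (2 ^ k - 1)‖ ^ 2 := by
    rw [hRHS]
    calc ‖((β : ℤ) : ℚ_[2]) ^ (2 ^ k) - (c : ℚ_[2])‖
        = ‖((β ^ (2 ^ k) - c : ℤ) : ℚ_[2])‖ := by push_cast; ring_nf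
      _ ≤ (2 : ℝ) ^ (-(2 * k + 1 : ℕ) : ℤ) := hL
      _ < (2 : ℝ) ^ (-(2 * k : ℕ) : ℤ) := by
          apply zpow_lt_zpow_right₀ (by norm_num)
          push_cast; linarith
  refine ⟨hmain, ?_⟩
  -- Hensel
  set F : Polynomial ℤ_[2] := X ^ (2 ^ k) - C ((c : ℤ) : ℤ_[2]) with hF
  have hevF : F.eval ((β : ℤ) : ℤ_[2]) = ((β : ℤ) : ℤ_[2]) ^ (2 ^ k) - ((c : ℤ) : ℤ_[2]) := by
    simp [hF]
  have hder : derivative F = C ((2 ^ k : ℕ) : ℤ_[2]) * X ^ (2 ^ k - 1) := by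
    simp [hF, derivative_X_pow]
  have hevF' : (derivative F).eval ((β : ℤ) : ℤ_[2])
      = ((2 ^ k : ℕ) : ℤ_[2]) * ((β : ℤ) : ℤ_[2]) ^ (2 ^ k - 1) := by
    simp [hder]
  have hnorm : ‖F.eval ((β : ℤ) : ℤ_[2])‖ < ‖(derivative F).eval ((β : ℤ) : ℤ_[2])‖ ^ 2 := by
    rw [hevF, hevF', PadicInt.norm_def, PadicInt.norm_def]
    convert hmain using 3 <;> push_cast <;> norm_num <;> left <;> rfl
  obtain ⟨z, hz, -⟩ := hensels_lemma hnorm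
  refine ⟨(z : ℚ_[2]), ?_⟩
  have : z ^ (2 ^ k) = ((c : ℤ) : ℤ_[2]) := by
    have := hz
    simp [hF] at this
    linear_combination this
  calc ((z : ℚ_[2])) ^ (2 ^ k) = ((z ^ (2 ^ k) : ℤ_[2]) : ℚ_[2]) := by push_cast; ring
    _ = (c : ℚ_[2]) := by rw [this]; push_cast; ring
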